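/- Let Γ be a discrete subgroup of SL(2,ℝ), let n ≥ 1, and let g₁, g₂ ∈ Γ with tr g₁ > 2 and tr g₂ > 2 and with nonzero lower-left entries. Suppose gᵢ = hᵢⁿ or gᵢ = −hᵢⁿ (i = 1, 2) for primitive hyperbolic elements h₁, h₂ ∈ Γ, where h ∈ Γ is primitive if there are no k ∈ Γ and m ≥ 2 with h = kᵐ or h = −kᵐ. If w_a(g₁) = w_a(g₂) and w_r(g₁) = w_r(g₂), then g₁ = g₂. -/

import Mathlib

noncomputable section

abbrev SL2 := Matrix.SpecialLinearGroup (Fin 2) ℝ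

/-- The matrix topology on `SL(2,ℝ)`, induced from the space of `2×2` real matrices. -/
instance : TopologicalSpace SL2 :=
  TopologicalSpace.induced (fun g => (g : Matrix (Fin 2) (Fin 2) ℝ)) inferInstance

/-- Trace of an element of `SL(2,ℝ)`. -/
def trc (g : SL2) : ℝ := g.1 0 0 + g.1 1 1

/-- `λ₊(g) = (tr g + √((tr g)² − 4))/2`. -/
def lamP (g : SL2) : ℝ := (trc g + Real.sqrt ((trc g) ^ 2 - 4)) / 2

/-- `λ₋(g) = (tr g − √((tr g)² − 4))/2`. -/
def lamM (g : SL2) : ℝ := (trc g - Real.sqrt ((trc g) ^ 2 - 4)) / 2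

/-- Attracting fixed point `w_a(g) = (λ₊(g) − d)/c` of a hyperbolic `g` with `c ≠ 0`. -/
def wA (g : SL2) : ℝ := (lamP g - g.1 1 1) / g.1 1 0

/-- Repelling fixed point `w_r(g) = (λ₋(g) − d)/c` of a hyperbolic `g` with `c ≠ 0`. -/
def wR (g : SL2) : ℝ := (lamM g - g.1 1 1) / g.1 1 0

/-- `h` is primitive in `Γ` if there are no `k ∈ Γ` and `m ≥ 2` with `h = kᵐ` or `h = −kᵐ`. -/
def IsPrimitiveIn (Γ : Subgroup SL2) (h : SL2) : Prop :=
  ¬∃ k ∈ Γ, ∃ m : ℕ, 2 ≤ m ∧ (h = k ^ m ∨ h = -(k ^ m))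


/-- `Fx w x` : the vector `(w,1)` is an eigenvector of `x`. -/
def Fx (w : ℝ) (x : SL2) : Prop :=
  x.1 0 0 * w + x.1 0 1 = (x.1 1 0 * w + x.1 1 1) * w

/-- the eigenvalue of `x` at the eigenvector `(w,1)`. -/
def ev (w : ℝ) (x : SL2) : ℝ := x.1 1 0 * w + x.1 1 1

lemma det_eq (x : SL2) : x.1 0 0 * x.1 1 1 - x.1 0 1 * x.1 1 0 = 1 := by
  have := x.2
  rwa [Matrix.det_fin_two] at this

lemma fx_one (w : ℝ) : Fx w 1 := by
  simp [Fx, Matrix.SpecialLinearGroup.coe_one, Matrix.one_apply]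

lemma ev_one (w : ℝ) : ev w 1 = 1 := by
  simp [ev, Matrix.SpecialLinearGroup.coe_one, Matrix.one_apply]

lemma fx_mul {w : ℝ} {x y : SL2} (hx : Fx w x) (hy : Fx w y) : Fx w (x * y) := by
  have hc := Matrix.SpecialLinearGroup.coe_mul x y
  unfold Fx at *
  rw [hc]
  simp only [Matrix.mul_apply, Fin.sum_univ_two]
  linear_combination x.1 0 0 * hy + (y.1 1 0 * w + y.1 1 1) * hx - x.1 1 0 * w * hy

lemma ev_mul {w : ℝ} (x : SL2) {y : SL2} (hy : Fx w y) : ev w (x * y) = ev w x * ev w y := by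
  have hc := Matrix.SpecialLinearGroup.coe_mul x y
  unfold Fx at hy
  unfold ev
  rw [hc]
  simp only [Matrix.mul_apply, Fin.sum_univ_two]
  ring_nf
  linear_combination x.1 1 0 * hy

lemma fx_neg {w : ℝ} {x : SL2} (hx : Fx w x) : Fx w (-x) := by
  have hc : ((-x : SL2) : Matrix (Fin 2) (Fin 2) ℝ) = -(x.1) := rfl
  unfold Fx at *
  rw [hc]
  simp only [Matrix.neg_apply]
  linear_combination -hx

lemma ev_neg (w : ℝ) (x : SL2) : ev w (-x) = -(ev w x) := by
  have hc : ((-x : SL2) : Matrix (Fin 2) (Fin 2) ℝ) = -(x.1) := rfl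
  unfold ev
  rw [hc]; simp only [Matrix.neg_apply]; ring

lemma fx_inv {w : ℝ} {x : SL2} (hx : Fx w x) : Fx w x⁻¹ := by
  have hc : ((x⁻¹ : SL2) : Matrix (Fin 2) (Fin 2) ℝ) = Matrix.adjugate x.1 :=
    Matrix.SpecialLinearGroup.coe_inv x
  unfold Fx at *
  rw [hc, Matrix.adjugate_fin_two]
  have hd := det_eq x
  simp only [Matrix.of_apply, Matrix.cons_val_zero, Matrix.cons_val_one, Matrix.head_cons,
    Matrix.cons_val', Matrix.empty_val', Matrix.cons_val_fin_one, Matrix.head_fin_const]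
  linear_combination -hx

lemma fx_pow {w : ℝ} {x : SL2} (hx : Fx w x) (n : ℕ) : Fx w (x ^ n) := by
  induction n with
  | zero => simpa using fx_one w
  | succ k ih => rw [pow_succ]; exact fx_mul ih hx

lemma ev_pow {w : ℝ} {x : SL2} (hx : Fx w x) (n : ℕ) : ev w (x ^ n) = (ev w x) ^ n := by
  induction n with
  | zero => simpa using ev_one w
  | succ k ih => rw [pow_succ, ev_mul _ hx, ih, pow_succ]

lemma ev_mul_ev_inv {w : ℝ} {x : SL2} (hx : Fx w x) : ev w x⁻¹ * ev w x = 1 := by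
  have := ev_mul (w := w) x⁻¹ hx
  rw [inv_mul_cancel, ev_one] at this; exact this.symm

/-- product of the two eigenvalues is the determinant, i.e. 1 -/
lemma ev_w_mul_ev_v {w v : ℝ} {x : SL2} (hw : Fx w x) (hv : Fx v x) (hne : w ≠ v) :
    ev w x * ev v x = 1 := by
  have hd := det_eq x
  have hsub : w - v ≠ 0 := sub_ne_zero.mpr hne
  unfold Fx at hw hv
  unfold ev
  -- a = c(w+v) + d,  b = -c w v
  have hA : (x.1 0 0 - x.1 1 0 * (w + v) - x.1 1 1) * (w - v) = 0 := by linear_combination hw - hv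
  have hA' : x.1 0 0 = x.1 1 0 * (w + v) + x.1 1 1 := by
    have := mul_eq_zero.mp hA
    rcases this with h | h
    · linarith [sub_eq_zero.mp h]
    · exact absurd h hsub
  have hB : x.1 0 1 = -(x.1 1 0 * w * v) := by linear_combination hw - w * hA'
  linear_combination hd - x.1 1 1 * hA' + x.1 1 0 * hB

lemma a_eq {w v : ℝ} {x : SL2} (hw : Fx w x) (hv : Fx v x) (hne : w ≠ v) :
    x.1 0 0 = x.1 1 0 * (w + v) + x.1 1 1 := by
  have hsub : w - v ≠ 0 := sub_ne_zero.mpr hne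
  unfold Fx at hw hv
  have hA : (x.1 0 0 - x.1 1 0 * (w + v) - x.1 1 1) * (w - v) = 0 := by linear_combination hw - hv
  rcases mul_eq_zero.mp hA with h | h
  · linarith [sub_eq_zero.mp h]
  · exact absurd h hsub

lemma b_eq {w v : ℝ} {x : SL2} (hw : Fx w x) (hv : Fx v x) (hne : w ≠ v) :
    x.1 0 1 = -(x.1 1 0 * w * v) := by
  have := a_eq hw hv hne
  unfold Fx at hw hv
  linear_combination hw - w * this

lemma trc_eq {w v : ℝ} {x : SL2} (hw : Fx w x) (hv : Fx v x) (hne : w ≠ v) :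
    trc x = ev w x + ev v x := by
  have := a_eq hw hv hne
  unfold trc ev
  linear_combination this

lemma ev_ne_zero {w v : ℝ} {x : SL2} (hw : Fx w x) (hv : Fx v x) (hne : w ≠ v) :
    ev w x ≠ 0 :=
  left_ne_zero_of_mul_eq_one (ev_w_mul_ev_v hw hv hne)

lemma eq_of_ev_eq {w v : ℝ} {x y : SL2} (hxw : Fx w x) (hxv : Fx v x)
    (hyw : Fx w y) (hyv : Fx v y) (hne : w ≠ v) (he : ev w x = ev w y) : x = y := by
  have hsub : w - v ≠ 0 := sub_ne_zero.mpr hne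
  have h1 := ev_w_mul_ev_v hxw hxv hne
  have h2 := ev_w_mul_ev_v hyw hyv hne
  have hx0 : ev w x ≠ 0 := left_ne_zero_of_mul_eq_one h1
  have hev : ev v x = ev v y := by
    apply mul_left_cancel₀ hx0
    rw [h1, he, h2]
  have hc : x.1 1 0 = y.1 1 0 := by
    have h3 : x.1 1 0 * (w - v) = y.1 1 0 * (w - v) := by
      unfold ev at he hev; linear_combination he - hev
    exact mul_right_cancel₀ hsub h3
  have hd : x.1 1 1 = y.1 1 1 := by
    unfold ev at he; linear_combination he - w * hc
  have ha' : x.1 0 0 = y.1 0 0 := by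
    rw [a_eq hxw hxv hne, a_eq hyw hyv hne, hc, hd]
  have hb : x.1 0 1 = y.1 0 1 := by
    rw [b_eq hxw hxv hne, b_eq hyw hyv hne, hc]
  apply Subtype.ext
  ext i j
  fin_cases i <;> fin_cases j <;> assumption

lemma fx_of_comm {w v : ℝ} {g x : SL2} (hgw : Fx w g) (hgv : Fx v g) (hne : w ≠ v)
    (hev : ev w g ≠ ev v g) (hcomm : g * x = x * g) : Fx w x ∧ Fx v x := by
  have hc0 : g.1 1 0 ≠ 0 := by
    intro h
    apply hev
    unfold ev
    rw [h]; ring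
  have hM : g.1 * x.1 = x.1 * g.1 := by
    rw [← Matrix.SpecialLinearGroup.coe_mul, ← Matrix.SpecialLinearGroup.coe_mul, hcomm]
  have E10 : g.1 1 0 * x.1 0 0 + g.1 1 1 * x.1 1 0
      = x.1 1 0 * g.1 0 0 + x.1 1 1 * g.1 1 0 := by
    have := congrFun (congrFun hM 1) 0
    simpa [Matrix.mul_apply, Fin.sum_univ_two] using this
  have E11 : g.1 1 0 * x.1 0 1 + g.1 1 1 * x.1 1 1
      = x.1 1 0 * g.1 0 1 + x.1 1 1 * g.1 1 1 := by
    have := congrFun (congrFun hM 1) 1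
    simpa [Matrix.mul_apply, Fin.sum_univ_two] using this
  unfold Fx at hgw hgv
  constructor
  · have key : g.1 1 0 * ((x.1 0 0 * w + x.1 0 1) - (x.1 1 0 * w + x.1 1 1) * w) = 0 := by
      linear_combination w * E10 + E11 + x.1 1 0 * hgw
    have := (mul_eq_zero.mp key).resolve_left hc0
    unfold Fx
    linarith [sub_eq_zero.mp this]
  · have key : g.1 1 0 * ((x.1 0 0 * v + x.1 0 1) - (x.1 1 0 * v + x.1 1 1) * v) = 0 := by
      linear_combination v * E10 + E11 + x.1 1 0 * hgv
    have := (mul_eq_zero.mp key).resolve_left hc0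
    unfold Fx
    linarith [sub_eq_zero.mp this]

lemma lamP_sq {g : SL2} (htr : 2 < trc g) : lamP g ^ 2 = trc g * lamP g - 1 := by
  have h4 : (0:ℝ) ≤ trc g ^ 2 - 4 := by nlinarith
  have hs := Real.sq_sqrt h4
  unfold lamP
  linear_combination hs / 4

lemma lamP_mul_lamM {g : SL2} (htr : 2 < trc g) : lamP g * lamM g = 1 := by
  have h4 : (0:ℝ) ≤ trc g ^ 2 - 4 := by nlinarith
  have hs := Real.sq_sqrt h4
  unfold lamP lamM
  linear_combination -hs / 4

lemma one_lt_lamP {g : SL2} (htr : 2 < trc g) : 1 < lamP g := by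
  have := Real.sqrt_nonneg (trc g ^ 2 - 4)
  unfold lamP
  linarith

lemma lamM_lt_lamP {g : SL2} (htr : 2 < trc g) : lamM g < lamP g := by
  have h4 : (0:ℝ) < trc g ^ 2 - 4 := by nlinarith
  have := Real.sqrt_pos.mpr h4
  unfold lamP lamM
  linarith

lemma fx_wA {g : SL2} (htr : 2 < trc g) (hc : g.1 1 0 ≠ 0) :
    Fx (wA g) g ∧ ev (wA g) g = lamP g := by
  have hsq := lamP_sq htr
  have hd := det_eq g
  have htr' : trc g = g.1 0 0 + g.1 1 1 := rfl
  constructor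
  · unfold Fx wA
    field_simp
    ring_nf
    ring_nf at hsq
    nlinarith [hsq, hd, sq_nonneg (g.1 1 0)]
  · unfold ev wA
    field_simp
    ring

lemma fx_wR {g : SL2} (htr : 2 < trc g) (hc : g.1 1 0 ≠ 0) :
    Fx (wR g) g ∧ ev (wR g) g = lamM g := by
  have hPM := lamP_mul_lamM htr
  have hsq : lamM g ^ 2 = trc g * lamM g - 1 := by
    have h4 : (0:ℝ) ≤ trc g ^ 2 - 4 := by nlinarith
    have hs := Real.sq_sqrt h4
    unfold lamM
    linear_combination hs / 4
  have hd := det_eq g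
  have htr' : trc g = g.1 0 0 + g.1 1 1 := rfl
  constructor
  · unfold Fx wR
    field_simp
    ring_nf
    ring_nf at hsq
    nlinarith [hsq, hd, sq_nonneg (g.1 1 0)]
  · unfold ev wR
    field_simp
    ring

def Fmat (w v l : ℝ) : Matrix (Fin 2) (Fin 2) ℝ :=
  !![(l * w - v / l) / (w - v), -((l - 1 / l) * w * v) / (w - v);
     (l - 1 / l) / (w - v), (w / l - l * v) / (w - v)]

lemma Fmat_one {w v : ℝ} (hne : w ≠ v) : Fmat w v 1 = 1 := by
  have hsub : w - v ≠ 0 := sub_ne_zero.mpr hne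
  unfold Fmat
  ext i j
  fin_cases i <;> fin_cases j <;>
    simp [Matrix.one_apply] <;> exact hsub

lemma eq_Fmat {w v : ℝ} {y : SL2} (hyw : Fx w y) (hyv : Fx v y) (hne : w ≠ v) :
    y.1 = Fmat w v (ev w y) := by
  have hsub : w - v ≠ 0 := sub_ne_zero.mpr hne
  have h1 := ev_w_mul_ev_v hyw hyv hne
  have hl0 : ev w y ≠ 0 := left_ne_zero_of_mul_eq_one h1
  have hm : ev v y = 1 / ev w y := eq_one_div_of_mul_eq_one_left (by linarith [h1] )
  have hcEnt : y.1 1 0 = (ev w y - 1 / ev w y) / (w - v) := by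
    rw [eq_div_iff hsub, ← hm]
    unfold ev; ring
  have hdEnt : y.1 1 1 = (w / ev w y - ev w y * v) / (w - v) := by
    rw [eq_div_iff hsub]
    have : w / ev w y = w * ev v y := by rw [hm]; ring
    rw [this]
    unfold ev; ring
  have haEnt : y.1 0 0 = (ev w y * w - v / ev w y) / (w - v) := by
    rw [eq_div_iff hsub, a_eq hyw hyv hne]
    have : v / ev w y = v * ev v y := by rw [hm]; ring
    rw [this]
    unfold ev; ring
  have hbEnt : y.1 0 1 = -((ev w y - 1 / ev w y) * w * v) / (w - v) := by
    rw [eq_div_iff hsub, b_eq hyw hyv hne]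
    have : (1:ℝ) / ev w y = ev v y := hm.symm
    rw [this]
    unfold ev; ring
  unfold Fmat
  ext i j
  fin_cases i <;> fin_cases j <;> simp [haEnt, hbEnt, hcEnt, hdEnt, one_div]

lemma cont_F {w v : ℝ} (hne : w ≠ v) :
    ContinuousAt (fun l : ℝ => Fmat w v l) 1 := by
  have hsub : w - v ≠ 0 := sub_ne_zero.mpr hne
  apply continuousAt_pi.mpr; intro i
  apply continuousAt_pi.mpr; intro j
  fin_cases i <;> fin_cases j <;> simp only [Fmat] <;> simp <;>
    fun_prop (disch := norm_num)

lemma isolated_one (Γ : Subgroup SL2) (hΓ : DiscreteTopology Γ) :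
    ∃ V : Set (Matrix (Fin 2) (Fin 2) ℝ), IsOpen V ∧ (1 : Matrix (Fin 2) (Fin 2) ℝ) ∈ V ∧
      ∀ x : SL2, x ∈ Γ → (x : Matrix (Fin 2) (Fin 2) ℝ) ∈ V → x = 1 := by
  have h1 : IsOpen ({1} : Set Γ) := isOpen_discrete _
  rw [isOpen_induced_iff] at h1
  obtain ⟨U, hU, hU1⟩ := h1
  rw [isOpen_induced_iff] at hU
  obtain ⟨V, hV, hVU⟩ := hU
  refine ⟨V, hV, ?_, ?_⟩
  · have : ((1 : Γ) : SL2) ∈ U := by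
      have : (1 : Γ) ∈ Subtype.val ⁻¹' U := by rw [hU1]; rfl
      exact this
    rw [← hVU] at this
    simpa using this
  · intro x hx hxV
    have hxU : x ∈ U := by rw [← hVU]; exact hxV
    have : (⟨x, hx⟩ : Γ) ∈ Subtype.val ⁻¹' U := hxU
    rw [hU1] at this
    simpa using this


lemma prim_level {w v a : ℝ} {Γ : Subgroup SL2} {x₀ h : SL2}
    (hne : w ≠ v)
    (hx₀Γ : x₀ ∈ Γ) (hx₀w : Fx w x₀) (hx₀v : Fx v x₀) (hx₀e : |ev w x₀| = Real.exp a)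
    (hhΓ : h ∈ Γ) (hhw : Fx w h) (hhv : Fx v h)
    (hprim : IsPrimitiveIn Γ h) (habs : |ev w h| ≠ 1)
    (k : ℤ) (hk : (k : ℝ) * a = Real.log |ev w h|) :
    Real.log |ev w h| = a ∨ Real.log |ev w h| = -a := by
  have he0 : ev w h ≠ 0 := ev_ne_zero hhw hhv hne
  have heabs : |ev w h| = Real.exp (Real.log |ev w h|) :=
    (Real.exp_log (abs_pos.mpr he0)).symm
  have hk0 : k ≠ 0 := by
    rintro rfl
    apply habs
    rw [heabs, ← hk]
    norm_num
  by_cases hk1 : k = 1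
  · left; rw [← hk, hk1]; push_cast; ring
  by_cases hkm1 : k = -1
  · right; rw [← hk, hkm1]; push_cast; ring
  exfalso
  -- |k| ≥ 2
  have hm2 : 2 ≤ k.natAbs := by omega
  set m : ℕ := k.natAbs with hm
  -- the element z with |ev w z| = exp((sign k) * a)
  obtain ⟨z, hzΓ, hzw, hzv, hze⟩ :
      ∃ z : SL2, z ∈ Γ ∧ Fx w z ∧ Fx v z ∧ |ev w z| ^ m = Real.exp ((k : ℝ) * a) := by
    rcases le_or_gt 0 k with hpos | hneg
    · refine ⟨x₀, hx₀Γ, hx₀w, hx₀v, ?_⟩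
      rw [hx₀e, ← Real.exp_nat_mul]
      congr 1
      have : (m : ℝ) = (k : ℝ) := by
        rw [hm]
        rw [Nat.cast_natAbs]
        exact_mod_cast abs_of_nonneg hpos
      rw [this]
    · refine ⟨x₀⁻¹, inv_mem hx₀Γ, fx_inv hx₀w, fx_inv hx₀v, ?_⟩
      have hinv := ev_mul_ev_inv hx₀w
      have habsinv : |ev w x₀⁻¹| = Real.exp (-a) := by
        have : |ev w x₀⁻¹| * |ev w x₀| = 1 := by rw [← abs_mul, hinv]; norm_num
        rw [hx₀e] at this
        rw [eq_inv_of_mul_eq_one_left this, Real.exp_neg]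
      rw [habsinv, ← Real.exp_nat_mul]
      congr 1
      have : (m : ℝ) = -(k : ℝ) := by
        rw [hm]
        have h5 : k.natAbs = (-k).toNat := by omega
        rw [h5]
        exact_mod_cast Int.toNat_of_nonneg (by omega : (0:ℤ) ≤ -k)
      rw [this]; ring
  -- z^m has the same |ev| as h
  have hzmw : Fx w (z ^ m) := fx_pow hzw m
  have hzmv : Fx v (z ^ m) := fx_pow hzv m
  have hzme : |ev w (z ^ m)| = |ev w h| := by
    rw [ev_pow hzw, abs_pow, hze, hk, ← heabs]
  -- u = h * (z^m)⁻¹ has |ev| = 1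
  set u : SL2 := h * (z ^ m)⁻¹ with hu
  have huw : Fx w u := fx_mul hhw (fx_inv hzmw)
  have huv : Fx v u := fx_mul hhv (fx_inv hzmv)
  have hue : |ev w u| = 1 := by
    have h1 : ev w u = ev w h * ev w (z ^ m)⁻¹ := ev_mul h (fx_inv hzmw)
    have h2 := ev_mul_ev_inv hzmw
    have hzm0 : ev w (z ^ m) ≠ 0 := ev_ne_zero hzmw hzmv hne
    have h3 : |ev w (z ^ m)⁻¹| * |ev w (z ^ m)| = 1 := by rw [← abs_mul, h2]; norm_num
    rw [h1, abs_mul, eq_inv_of_mul_eq_one_left h3, hzme, ← hzme]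
    field_simp
  rcases (abs_eq (by norm_num : (0:ℝ) ≤ 1)).mp hue with h1 | h1
  · -- u = 1, so h = z^m
    have : u = 1 := by
      apply eq_of_ev_eq huw huv (fx_one w) (fx_one v) hne
      rw [h1, ev_one]
    have hhz : h = z ^ m := by
      rw [hu] at this
      exact mul_inv_eq_one.mp this
    exact hprim ⟨z, hzΓ, m, hm2, Or.inl hhz⟩
  · -- u = -1, so h = -(z^m)
    have hneg1 : u = -1 := by
      apply eq_of_ev_eq huw huv (fx_neg (fx_one w)) (fx_neg (fx_one v)) hne
      rw [h1, ev_neg, ev_one]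
    have hhz : h = -(z ^ m) := by
      have : u * z ^ m = -1 * z ^ m := by rw [hneg1]
      rw [hu, inv_mul_cancel_right] at this
      rw [this]
      apply Subtype.ext
      simp
    exact hprim ⟨z, hzΓ, m, hm2, Or.inr hhz⟩


/-- in a discrete subgroup `Γ ≤ SL(2,ℝ)`, two hyperbolic elements
`g₁, g₂` (with `tr > 2`, nonzero lower-left entries) of the same level `n ≥ 1`
(i.e. `gᵢ = ±hᵢⁿ` with `hᵢ` primitive hyperbolic) having the same attracting and
repelling fixed points are equal. -/
theorem stmt_8 (Γ : Subgroup SL2) (hΓ : DiscreteTopology Γ) (n : ℕ) (hn : 1 ≤ n)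
    (g₁ g₂ h₁ h₂ : SL2) (hg₁ : g₁ ∈ Γ) (hg₂ : g₂ ∈ Γ)
    (htr₁ : trc g₁ > 2) (htr₂ : trc g₂ > 2)
    (hc₁ : g₁.1 1 0 ≠ 0) (hc₂ : g₂.1 1 0 ≠ 0)
    (hh₁ : h₁ ∈ Γ) (hh₂ : h₂ ∈ Γ)
    (hhyp₁ : |trc h₁| > 2) (hhyp₂ : |trc h₂| > 2)
    (hprim₁ : IsPrimitiveIn Γ h₁) (hprim₂ : IsPrimitiveIn Γ h₂)
    (hpow₁ : g₁ = h₁ ^ n ∨ g₁ = -(h₁ ^ n)) (hpow₂ : g₂ = h₂ ^ n ∨ g₂ = -(h₂ ^ n))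
    (ha : wA g₁ = wA g₂) (hr : wR g₁ = wR g₂) :
    g₁ = g₂ := by
  classical
  set w := wA g₁ with hwdef
  set v := wR g₁ with hvdef
  have hne : w ≠ v := by
    intro h
    rw [hwdef, hvdef] at h
    unfold wA wR at h
    rw [div_eq_div_iff hc₁ hc₁] at h
    have h2 := mul_right_cancel₀ hc₁ h
    have := lamM_lt_lamP htr₁
    linarith
  -- fixed point data for g₁ and g₂
  obtain ⟨hfw₁, hew₁⟩ := fx_wA htr₁ hc₁
  obtain ⟨hfv₁, hev₁⟩ := fx_wR htr₁ hc₁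
  have hfw₂' := fx_wA htr₂ hc₂
  have hfv₂' := fx_wR htr₂ hc₂
  rw [← ha] at hfw₂'
  rw [← hr] at hfv₂'
  obtain ⟨hfw₂, hew₂⟩ := hfw₂'
  obtain ⟨hfv₂, hev₂⟩ := hfv₂'
  have hevne₁ : ev w g₁ ≠ ev v g₁ := by
    rw [hew₁, hev₁]; exact (lamM_lt_lamP htr₁).ne'
  have hevne₂ : ev w g₂ ≠ ev v g₂ := by
    rw [hew₂, hev₂]; exact (lamM_lt_lamP htr₂).ne'
  -- h₁, h₂ fix the same points
  have hcomm₁ : g₁ * h₁ = h₁ * g₁ := by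
    rcases hpow₁ with h | h <;> rw [h]
    · exact ((Commute.refl h₁).pow_left n).eq
    · rw [neg_mul, mul_neg, ((Commute.refl h₁).pow_left n).eq]
  have hcomm₂ : g₂ * h₂ = h₂ * g₂ := by
    rcases hpow₂ with h | h <;> rw [h]
    · exact ((Commute.refl h₂).pow_left n).eq
    · rw [neg_mul, mul_neg, ((Commute.refl h₂).pow_left n).eq]
  obtain ⟨hfwh₁, hfvh₁⟩ := fx_of_comm hfw₁ hfv₁ hne hevne₁ hcomm₁
  obtain ⟨hfwh₂, hfvh₂⟩ := fx_of_comm hfw₂ hfv₂ hne hevne₂ hcomm₂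
  -- the additive subgroup of logarithms of eigenvalues
  let P : ℝ → Prop := fun t => ∃ x : SL2, x ∈ Γ ∧ Fx w x ∧ Fx v x ∧ |ev w x| = Real.exp t
  have hP0 : P 0 := ⟨1, one_mem Γ, fx_one w, fx_one v, by rw [ev_one]; simp⟩
  have hPadd : ∀ s t : ℝ, P s → P t → P (s + t) := by
    rintro s t ⟨x, hxΓ, hxw, hxv, hxe⟩ ⟨y, hyΓ, hyw, hyv, hye⟩
    exact ⟨x * y, mul_mem hxΓ hyΓ, fx_mul hxw hyw, fx_mul hxv hyv, by
      rw [ev_mul x hyw, abs_mul, hxe, hye, Real.exp_add]⟩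
  have hPneg : ∀ t : ℝ, P t → P (-t) := by
    rintro t ⟨x, hxΓ, hxw, hxv, hxe⟩
    refine ⟨x⁻¹, inv_mem hxΓ, fx_inv hxw, fx_inv hxv, ?_⟩
    have h2 := ev_mul_ev_inv hxw
    have h3 : |ev w x⁻¹| * |ev w x| = 1 := by rw [← abs_mul, h2]; norm_num
    rw [hxe] at h3
    rw [eq_inv_of_mul_eq_one_left h3, Real.exp_neg]
  let A : AddSubgroup ℝ :=
    { carrier := setOf P
      zero_mem' := hP0
      add_mem' := fun hs ht => hPadd _ _ hs ht
      neg_mem' := fun ht => hPneg _ ht }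
  rcases A.dense_or_cyclic with hdense | ⟨a, hAa⟩
  · -- dense case: contradicts discreteness
    exfalso
    obtain ⟨V, hVopen, hV1, hVone⟩ := isolated_one Γ hΓ
    have hcont : ContinuousAt (fun t : ℝ => Fmat w v (Real.exp (2 * t))) 0 := by
      have heq : (fun t : ℝ => Fmat w v (Real.exp (2 * t)))
          = (fun l : ℝ => Fmat w v l) ∘ (fun t : ℝ => Real.exp (2 * t)) := rfl
      rw [heq]
      apply ContinuousAt.comp
      · rw [show Real.exp (2 * (0:ℝ)) = 1 by norm_num]
        exact cont_F hne
      · fun_prop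
    have hmem : {t : ℝ | Fmat w v (Real.exp (2 * t)) ∈ V} ∈ nhds (0:ℝ) := by
      apply hcont.preimage_mem_nhds
      apply hVopen.mem_nhds
      norm_num [Real.exp_zero, Fmat_one hne]
      exact hV1
    obtain ⟨δ, hδ, hball⟩ := Metric.mem_nhds_iff.mp hmem
    obtain ⟨t, htA, htI⟩ := hdense.exists_mem_open isOpen_Ioo
      (⟨δ/2, by constructor <;> linarith⟩ : (Set.Ioo (0:ℝ) δ).Nonempty)
    obtain ⟨x, hxΓ, hxw, hxv, hxe⟩ := htA
    set y : SL2 := x * x with hy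
    have hyw : Fx w y := fx_mul hxw hxw
    have hyv : Fx v y := fx_mul hxv hxv
    have hye : ev w y = Real.exp (2 * t) := by
      rw [hy, ev_mul x hxw, ← abs_mul_abs_self, hxe, ← Real.exp_add, two_mul]
    have hymat : (y : Matrix (Fin 2) (Fin 2) ℝ) = Fmat w v (Real.exp (2 * t)) := by
      rw [← hye]; exact eq_Fmat hyw hyv hne
    have hyV : (y : Matrix (Fin 2) (Fin 2) ℝ) ∈ V := by
      rw [hymat]
      apply hball
      rw [Metric.mem_ball, Real.dist_eq, sub_zero, abs_of_pos htI.1]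
      exact htI.2
    have hy1 : y = 1 := hVone y (mul_mem hxΓ hxΓ) hyV
    rw [hy1, ev_one] at hye
    have h0 : Real.exp (2 * t) = Real.exp 0 := by rw [Real.exp_zero]; exact hye.symm
    have := Real.exp_eq_exp.mp h0
    linarith [htI.1]
  · -- cyclic case
    -- membership facts
    have hmem : ∀ t : ℝ, P t → ∃ k : ℤ, (k : ℝ) * a = t := by
      intro t ht
      have : t ∈ AddSubgroup.closure {a} := by rw [← hAa]; exact ht
      obtain ⟨k, hk⟩ := AddSubgroup.mem_closure_singleton.mp this
      exact ⟨k, by rw [← hk, zsmul_eq_mul]⟩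
    have haA : P a := by
      have : a ∈ AddSubgroup.closure ({a} : Set ℝ) :=
        AddSubgroup.subset_closure rfl
      rw [← hAa] at this
      exact this
    obtain ⟨x₀, hx₀Γ, hx₀w, hx₀v, hx₀e⟩ := haA
    -- eigenvalues of h₁, h₂
    have he₁0 : ev w h₁ ≠ 0 := ev_ne_zero hfwh₁ hfvh₁ hne
    have he₂0 : ev w h₂ ≠ 0 := ev_ne_zero hfwh₂ hfvh₂ hne
    have habs₁ : |ev w h₁| ≠ 1 := by
      intro h
      have hprod := ev_w_mul_ev_v hfwh₁ hfvh₁ hne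
      have h2 : |ev v h₁| = 1 := by
        have h3 := congrArg abs hprod
        rw [abs_mul, h] at h3
        simpa using h3
      have htr := trc_eq hfwh₁ hfvh₁ hne
      have h4 : |trc h₁| ≤ 2 := by
        rw [htr]
        calc |ev w h₁ + ev v h₁| ≤ |ev w h₁| + |ev v h₁| := abs_add_le _ _
        _ = 2 := by rw [h, h2]; norm_num
      linarith
    have habs₂ : |ev w h₂| ≠ 1 := by
      intro h
      have hprod := ev_w_mul_ev_v hfwh₂ hfvh₂ hne
      have h2 : |ev v h₂| = 1 := by
        have h3 := congrArg abs hprod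
        rw [abs_mul, h] at h3
        simpa using h3
      have htr := trc_eq hfwh₂ hfvh₂ hne
      have h4 : |trc h₂| ≤ 2 := by
        rw [htr]
        calc |ev w h₂ + ev v h₂| ≤ |ev w h₂| + |ev v h₂| := abs_add_le _ _
        _ = 2 := by rw [h, h2]; norm_num
      linarith
    -- the levels of h₁, h₂
    have hPth₁ : P (Real.log |ev w h₁|) :=
      ⟨h₁, hh₁, hfwh₁, hfvh₁, (Real.exp_log (abs_pos.mpr he₁0)).symm⟩
    have hPth₂ : P (Real.log |ev w h₂|) :=
      ⟨h₂, hh₂, hfwh₂, hfvh₂, (Real.exp_log (abs_pos.mpr he₂0)).symm⟩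
    obtain ⟨k₁, hk₁⟩ := hmem _ hPth₁
    obtain ⟨k₂, hk₂⟩ := hmem _ hPth₂
    have hlev₁ := prim_level hne hx₀Γ hx₀w hx₀v hx₀e hh₁ hfwh₁ hfvh₁ hprim₁ habs₁ k₁ hk₁
    have hlev₂ := prim_level hne hx₀Γ hx₀w hx₀v hx₀e hh₂ hfwh₂ hfvh₂ hprim₂ habs₂ k₂ hk₂
    -- eigenvalues of g₁, g₂
    have hgabs : ∀ (g h : SL2), g = h ^ n ∨ g = -(h ^ n) → Fx w h →
        |ev w g| = |ev w h| ^ n := by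
      rintro g h (rfl | rfl) hhw
      · rw [ev_pow hhw, abs_pow]
      · rw [ev_neg, abs_neg, ev_pow hhw, abs_pow]
    have habsg₁ : |ev w g₁| = |ev w h₁| ^ n := hgabs g₁ h₁ hpow₁ hfwh₁
    have habsg₂ : |ev w g₂| = |ev w h₂| ^ n := hgabs g₂ h₂ hpow₂ hfwh₂
    have hpos₁ : (1:ℝ) < ev w g₁ := by rw [hew₁]; exact one_lt_lamP htr₁
    have hpos₂ : (1:ℝ) < ev w g₂ := by rw [hew₂]; exact one_lt_lamP htr₂
    have hg₁e : ev w g₁ = Real.exp ((n : ℝ) * Real.log |ev w h₁|) := by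
      rw [← abs_of_pos (by linarith : (0:ℝ) < ev w g₁), habsg₁,
        Real.exp_nat_mul, Real.exp_log (abs_pos.mpr he₁0)]
    have hg₂e : ev w g₂ = Real.exp ((n : ℝ) * Real.log |ev w h₂|) := by
      rw [← abs_of_pos (by linarith : (0:ℝ) < ev w g₂), habsg₂,
        Real.exp_nat_mul, Real.exp_log (abs_pos.mpr he₂0)]
    -- conclude
    have heq : ev w g₁ = ev w g₂ := by
      rcases hlev₁ with hl₁ | hl₁ <;> rcases hlev₂ with hl₂ | hl₂ <;>
        rw [hg₁e, hg₂e, hl₁, hl₂]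
      · exfalso
        have h1 : Real.exp ((n:ℝ) * a) * Real.exp ((n:ℝ) * -a) = 1 := by
          rw [← Real.exp_add, show (n:ℝ) * a + (n:ℝ) * -a = 0 by ring, Real.exp_zero]
        rw [hg₁e, hl₁] at hpos₁
        rw [hg₂e, hl₂] at hpos₂
        nlinarith
      · exfalso
        have h1 : Real.exp ((n:ℝ) * -a) * Real.exp ((n:ℝ) * a) = 1 := by
          rw [← Real.exp_add, show (n:ℝ) * -a + (n:ℝ) * a = 0 by ring, Real.exp_zero]
        rw [hg₁e, hl₁] at hpos₁
        rw [hg₂e, hl₂] at hpos₂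
        nlinarith
    exact eq_of_ev_eq hfw₁ hfv₁ hfw₂ hfv₂ hne heq
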